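/- Let Λ be a finite index set equipped with a pseudometric dist. For any matrices m₁, m₂ ∈ Matrix Λ Λ ℂ and any r₁, r₂ ≥ 0, one has ‖m₁ m₂‖_{r₁ + r₂} ≤ ‖m₁‖_{r₁} · ‖m₂‖ + ‖m₁‖ · ‖m₂‖_{r₂}. -/

import Mathlib

/-- The l2 -> l2 operator norm of a matrix. -/
noncomputable def matOpNorm {Λ : Type*} [Fintype Λ] [DecidableEq Λ]
    (m : Matrix Λ Λ ℂ) : ℝ :=
  ‖Matrix.toEuclideanCLM (𝕜 := ℂ) m‖

/-- The quantity ‖m‖_r : the supremum of |⟨ψ, m φ⟩| over l2-unit vectors ψ, φ whose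
supports are at distance greater than r (all pairwise distances exceed r). -/
noncomputable def matDistNorm {Λ : Type*} [Fintype Λ] [DecidableEq Λ]
    [PseudoMetricSpace Λ] (m : Matrix Λ Λ ℂ) (r : ℝ) : ℝ :=
  sSup { x : ℝ | ∃ ψ φ : EuclideanSpace ℂ Λ, ‖ψ‖ = 1 ∧ ‖φ‖ = 1 ∧
    (∀ i ∈ Function.support ψ, ∀ j ∈ Function.support φ, r < dist i j) ∧
    x = ‖(inner ℂ ψ (Matrix.toEuclideanCLM (𝕜 := ℂ) m φ) : ℂ)‖ }

section Aux

variable {Λ : Type*} [Fintype Λ] [DecidableEq Λ] [PseudoMetricSpace Λ]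

lemma matDistNorm_set_bddAbove (m : Matrix Λ Λ ℂ) (r : ℝ) :
    BddAbove { x : ℝ | ∃ ψ φ : EuclideanSpace ℂ Λ, ‖ψ‖ = 1 ∧ ‖φ‖ = 1 ∧
    (∀ i ∈ Function.support ψ, ∀ j ∈ Function.support φ, r < dist i j) ∧
    x = ‖(inner ℂ ψ (Matrix.toEuclideanCLM (𝕜 := ℂ) m φ) : ℂ)‖ } := by
  refine ⟨matOpNorm m, ?_⟩
  rintro x ⟨ψ, φ, hψ, hφ, -, rfl⟩
  calc ‖(inner ℂ ψ (Matrix.toEuclideanCLM (𝕜 := ℂ) m φ) : ℂ)‖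
      ≤ ‖ψ‖ * ‖Matrix.toEuclideanCLM (𝕜 := ℂ) m φ‖ := norm_inner_le_norm _ _
    _ ≤ ‖ψ‖ * (‖Matrix.toEuclideanCLM (𝕜 := ℂ) m‖ * ‖φ‖) := by
        gcongr; exact (Matrix.toEuclideanCLM (𝕜 := ℂ) m).le_opNorm φ
    _ = matOpNorm m := by rw [hψ, hφ, one_mul, mul_one]; rfl

lemma le_matDistNorm (m : Matrix Λ Λ ℂ) (r : ℝ) (ψ φ : EuclideanSpace ℂ Λ)
    (hψ : ‖ψ‖ = 1) (hφ : ‖φ‖ = 1)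
    (hs : ∀ i ∈ Function.support ψ, ∀ j ∈ Function.support φ, r < dist i j) :
    ‖(inner ℂ ψ (Matrix.toEuclideanCLM (𝕜 := ℂ) m φ) : ℂ)‖ ≤ matDistNorm m r := by
  exact le_csSup (matDistNorm_set_bddAbove m r) ⟨ψ, φ, hψ, hφ, hs, rfl⟩

lemma matDistNorm_nonneg (m : Matrix Λ Λ ℂ) (r : ℝ) : 0 ≤ matDistNorm m r := by
  apply Real.sSup_nonneg
  rintro x ⟨ψ, φ, -, -, -, rfl⟩
  exact norm_nonneg _

lemma trunc_norm_le (v w : EuclideanSpace ℂ Λ) (h : ∀ k, w k = v k ∨ w k = 0) :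
    ‖w‖ ≤ ‖v‖ := by
  rw [EuclideanSpace.norm_eq, EuclideanSpace.norm_eq]
  apply Real.sqrt_le_sqrt
  apply Finset.sum_le_sum
  intro i _
  rcases h i with h' | h' <;> simp [h'] <;> positivity

end Aux


/-- Submultiplicative-type bound: ‖m₁ m₂‖_{r₁+r₂} ≤ ‖m₁‖_{r₁} ‖m₂‖ + ‖m₁‖ ‖m₂‖_{r₂}. -/
theorem matDistNorm_mul_le
    {Λ : Type*} [Fintype Λ] [DecidableEq Λ] [PseudoMetricSpace Λ]
    (m₁ m₂ : Matrix Λ Λ ℂ) (r₁ r₂ : ℝ) (hr₁ : 0 ≤ r₁) (hr₂ : 0 ≤ r₂) :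
    matDistNorm (m₁ * m₂) (r₁ + r₂) ≤
      matDistNorm m₁ r₁ * matOpNorm m₂ + matOpNorm m₁ * matDistNorm m₂ r₂ := by
  classical
  have hnn₁ := matDistNorm_nonneg m₁ r₁
  have hnn₂ := matDistNorm_nonneg m₂ r₂
  have hop₁ : (0:ℝ) ≤ matOpNorm m₁ := norm_nonneg _
  have hop₂ : (0:ℝ) ≤ matOpNorm m₂ := norm_nonneg _
  apply Real.sSup_le _ (by positivity)
  rintro x ⟨ψ, φ, hψ, hφ, hsupp, rfl⟩
  set T₁ := Matrix.toEuclideanCLM (𝕜 := ℂ) m₁ with hT₁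
  set T₂ := Matrix.toEuclideanCLM (𝕜 := ℂ) m₂ with hT₂
  set v : EuclideanSpace ℂ Λ := T₂ φ with hv
  set p : Λ → Prop := fun k => ∃ j ∈ Function.support φ, dist k j ≤ r₂ with hp
  set v₁ : EuclideanSpace ℂ Λ := WithLp.toLp 2 (fun k => if p k then v k else 0) with hv₁
  set v₂ : EuclideanSpace ℂ Λ := WithLp.toLp 2 (fun k => if p k then 0 else v k) with hv₂
  have hsplit : v = v₁ + v₂ := by
    ext k
    by_cases h : p k <;> simp [hv₁, hv₂, h]
  have hvle : ‖v‖ ≤ matOpNorm m₂ := by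
    calc ‖T₂ φ‖ ≤ ‖T₂‖ * ‖φ‖ := T₂.le_opNorm φ
      _ = matOpNorm m₂ := by rw [hφ, mul_one]; rfl
  have hmul : (Matrix.toEuclideanCLM (𝕜 := ℂ) (m₁ * m₂)) φ = T₁ (T₂ φ) := by
    rw [map_mul]; rfl
  have key : (inner ℂ ψ (Matrix.toEuclideanCLM (𝕜 := ℂ) (m₁ * m₂) φ) : ℂ)
      = inner ℂ ψ (T₁ v₁) + inner ℂ ψ (T₁ v₂) := by
    rw [hmul, ← hv, hsplit, map_add, inner_add_right]
  rw [key]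
  refine le_trans (norm_add_le _ _) (add_le_add ?_ ?_)
  · -- first term
    by_cases hz : v₁ = 0
    · simp only [hz, map_zero, inner_zero_right, norm_zero]
      positivity
    · have hnv : ‖v₁‖ ≠ 0 := norm_ne_zero_iff.mpr hz
      set u : EuclideanSpace ℂ Λ := (‖v₁‖⁻¹ : ℂ) • v₁ with hu
      have hun : ‖u‖ = 1 := by
        rw [hu, norm_smul]
        simp [norm_inv, hnv]
      have hsuppu : ∀ i ∈ Function.support ψ, ∀ k ∈ Function.support u, r₁ < dist i k := by
        intro i hi k hk
        have hk' : v₁ k ≠ 0 := by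
          intro h
          apply hk
          simp [hu, h]
        have hkp : p k := by
          by_contra h
          exact hk' (by simp [hv₁, h])
        obtain ⟨j, hj, hdj⟩ := hkp
        have h1 := hsupp i hi j hj
        have h2 := dist_triangle i k j
        linarith
      have h1 : ‖(inner ℂ ψ (T₁ u) : ℂ)‖ ≤ matDistNorm m₁ r₁ := by
        rw [hT₁]
        exact le_matDistNorm m₁ r₁ ψ u hψ hun hsuppu
      have hvsm : v₁ = (‖v₁‖ : ℂ) • u := by
        rw [hu, smul_smul, mul_inv_cancel₀ (Complex.ofReal_ne_zero.mpr hnv), one_smul]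
      have hv₁le : ‖v₁‖ ≤ matOpNorm m₂ := by
        refine le_trans (trunc_norm_le v v₁ ?_) hvle
        intro k
        by_cases h : p k
        · left; simp [hv₁, h]
        · right; simp [hv₁, h]
      calc ‖(inner ℂ ψ (T₁ v₁) : ℂ)‖ = ‖v₁‖ * ‖(inner ℂ ψ (T₁ u) : ℂ)‖ := by
            rw [hvsm, map_smul, inner_smul_right, norm_mul, Complex.norm_real, norm_norm,
              norm_smul, hun, mul_one, Complex.norm_real, norm_norm]
        _ ≤ matOpNorm m₂ * matDistNorm m₁ r₁ :=
            mul_le_mul hv₁le h1 (norm_nonneg _) hop₂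
        _ = matDistNorm m₁ r₁ * matOpNorm m₂ := mul_comm _ _
  · -- second term
    have h2 : ‖(inner ℂ ψ (T₁ v₂) : ℂ)‖ ≤ matOpNorm m₁ * ‖v₂‖ := by
      calc ‖(inner ℂ ψ (T₁ v₂) : ℂ)‖ ≤ ‖ψ‖ * ‖T₁ v₂‖ := norm_inner_le_norm _ _
        _ ≤ ‖ψ‖ * (‖T₁‖ * ‖v₂‖) := by gcongr; exact T₁.le_opNorm v₂
        _ = matOpNorm m₁ * ‖v₂‖ := by rw [hψ, one_mul]; rfl
    have hv₂le : ‖v₂‖ ≤ matDistNorm m₂ r₂ := by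
      by_cases hz : v₂ = 0
      · simp [hz, hnn₂]
      · have hnv : ‖v₂‖ ≠ 0 := norm_ne_zero_iff.mpr hz
        set u : EuclideanSpace ℂ Λ := (‖v₂‖⁻¹ : ℂ) • v₂ with hu
        have hun : ‖u‖ = 1 := by
          rw [hu, norm_smul]
          simp [norm_inv, hnv]
        have hsuppu : ∀ i ∈ Function.support u, ∀ j ∈ Function.support φ, r₂ < dist i j := by
          intro k hk j hj
          have hk' : v₂ k ≠ 0 := by
            intro h; apply hk; simp [hu, h]
          have hkp : ¬ p k := by
            by_contra h
            exact hk' (by simp [hv₂, h])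
          simp only [hp] at hkp
          push_neg at hkp
          exact hkp j hj
        have hinner : (inner ℂ u (T₂ φ) : ℂ) = (‖v₂‖ : ℂ) := by
          have horth : (inner ℂ v₂ v₁ : ℂ) = 0 := by
            rw [PiLp.inner_apply]
            apply Finset.sum_eq_zero
            intro k _
            by_cases h : p k <;> simp [hv₁, hv₂, h]
          calc (inner ℂ u (T₂ φ) : ℂ) = inner ℂ ((‖v₂‖⁻¹ : ℂ) • v₂) v := rfl
            _ = (starRingEnd ℂ) (‖v₂‖⁻¹ : ℂ) * inner ℂ v₂ v := inner_smul_left _ _ _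
            _ = (‖v₂‖⁻¹ : ℂ) * (inner ℂ v₂ v₁ + inner ℂ v₂ v₂) := by
                rw [hsplit, inner_add_right, map_inv₀, Complex.conj_ofReal]
            _ = (‖v₂‖ : ℂ) := by
                have h0 : (‖v₂‖ : ℂ) ≠ 0 := Complex.ofReal_ne_zero.mpr hnv
                rw [horth, zero_add, inner_self_eq_norm_sq_to_K]
                field_simp
                rfl
        calc ‖v₂‖ = ‖(inner ℂ u (Matrix.toEuclideanCLM (𝕜 := ℂ) m₂ φ) : ℂ)‖ := by
              rw [← hT₂, hinner, Complex.norm_real, Real.norm_eq_abs,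
                abs_of_nonneg (norm_nonneg _)]
          _ ≤ matDistNorm m₂ r₂ := le_matDistNorm m₂ r₂ u φ hun hφ hsuppu
    calc ‖(inner ℂ ψ (T₁ v₂) : ℂ)‖ ≤ matOpNorm m₁ * ‖v₂‖ := h2
      _ ≤ matOpNorm m₁ * matDistNorm m₂ r₂ := by gcongr
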